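/- Let WC_n^d denote the cycle graph C_n for odd n ≥ 3 with one pendant leaf attached to each vertex (fully whiskered odd cycle). Then M₂(WC_n^d) is homotopy equivalent to the sphere S^{n−1}. -/

import Mathlib

noncomputable section

/-- An abstract simplicial complex on vertex type `V` (faces include `∅`). -/
structure AbsSC (V : Type*) where
  faces : Set (Finset V)
  down_closed : ∀ ⦃σ τ : Finset V⦄, σ ∈ faces → τ ⊆ σ → τ ∈ faces

/-- Geometric realization of an abstract simplicial complex on a finite vertex set. -/
def realization {V : Type*} [Fintype V] (K : AbsSC V) : Type _ :=
  {f : V → ℝ // (∀ v, 0 ≤ f v) ∧ (∑ v, f v) = 1 ∧ ∃ σ ∈ K.faces, ∀ v, f v ≠ 0 → v ∈ σ}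

instance {V : Type*} [Fintype V] (K : AbsSC V) : TopologicalSpace (realization K) := by
  unfold realization; infer_instance

/-- The `n`-sphere. -/
def sphereSpace (n : ℕ) : Type := Metric.sphere (0 : EuclideanSpace ℝ (Fin (n+1))) 1

instance (n : ℕ) : TopologicalSpace (sphereSpace n) := by
  unfold sphereSpace; infer_instance

/-- A base point on the `n`-sphere. -/
def basept (n : ℕ) : sphereSpace n :=
  ⟨EuclideanSpace.single 0 1, by
    simp [sphereSpace, EuclideanSpace.norm_single]⟩

/-- A wedge of `k` copies of the `n`-sphere (one-point union at the base points). -/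
def wedgeSpheres (k n : ℕ) : Type :=
  Quot (fun a b : (Σ _ : Fin k, sphereSpace n) ⊕ Unit =>
    b = Sum.inr () ∧ ∃ i : Fin k, a = Sum.inl ⟨i, basept n⟩)

instance (k n : ℕ) : TopologicalSpace (wedgeSpheres k n) := by
  unfold wedgeSpheres; infer_instance

/-- `H` is a 2-matching of `G`: a set of edges of `G` such that every vertex is
incident to at most 2 of them. -/
def IsTwoMatching {V : Type*} [DecidableEq V] (G : SimpleGraph V) (H : Finset (Sym2 V)) : Prop :=
  ↑H ⊆ G.edgeSet ∧ ∀ v : V, (H.filter (fun e => v ∈ e)).card ≤ 2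

/-- `H` is a matching of `G`. -/
def IsMatchingSet {V : Type*} [DecidableEq V] (G : SimpleGraph V) (H : Finset (Sym2 V)) : Prop :=
  ↑H ⊆ G.edgeSet ∧ ∀ v : V, (H.filter (fun e => v ∈ e)).card ≤ 1

/-- The 2-matching complex `M₂(G)`. -/
def M2 {V : Type*} [DecidableEq V] (G : SimpleGraph V) : AbsSC (Sym2 V) where
  faces := {H | IsTwoMatching G H}
  down_closed := by
    intro σ τ hσ hτ
    exact ⟨fun e he => hσ.1 (hτ he), fun v =>
      le_trans (Finset.card_le_card (Finset.filter_subset_filter _ hτ)) (hσ.2 v)⟩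

/-- The matching complex `M₁(G)`. -/
def M1 {V : Type*} [DecidableEq V] (G : SimpleGraph V) : AbsSC (Sym2 V) where
  faces := {H | IsMatchingSet G H}
  down_closed := by
    intro σ τ hσ hτ
    exact ⟨fun e he => hσ.1 (hτ he), fun v =>
      le_trans (Finset.card_le_card (Finset.filter_subset_filter _ hτ)) (hσ.2 v)⟩

/-- The independence complex of a graph. -/
def IndC {V : Type*} (G : SimpleGraph V) : AbsSC V where
  faces := {S | ∀ a ∈ S, ∀ b ∈ S, ¬ G.Adj a b}
  down_closed := by
    intro σ τ hσ hτ a ha b hb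
    exact hσ a (hτ ha) b (hτ hb)


/-- The fully whiskered `N`-cycle: the cycle on `Fin N` (`inl` vertices) with one
pendant leaf (`inr` vertices) attached to each cycle vertex. -/
def whiskeredCycle (N : ℕ) : SimpleGraph (Fin N ⊕ Fin N) :=
  SimpleGraph.fromRel (fun a b =>
    match a, b with
    | Sum.inl i, Sum.inl j =>
        (j : ℕ) = (i : ℕ) + 1 ∨ ((i : ℕ) = N - 1 ∧ (j : ℕ) = 0)
    | Sum.inl i, Sum.inr j => i = j
    | _, _ => False)

namespace WCdev
set_option linter.unusedSectionVars false
variable {n : ℕ} [NeZero n]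
abbrev wE (i : Fin n) : Sym2 (Fin n ⊕ Fin n) := s(Sum.inl i, Sum.inr i)
abbrev cE (i : Fin n) : Sym2 (Fin n ⊕ Fin n) := s(Sum.inl i, Sum.inl (i+1))

lemma one_ne_zero' (hn : 3 ≤ n) : (1 : Fin n) ≠ 0 := by
  intro h
  have h2 := congrArg Fin.val h
  rw [Fin.val_one', Fin.val_zero, Nat.mod_eq_of_lt (by omega)] at h2
  omega

lemma two_ne_zero' (hn : 3 ≤ n) : (1 + 1 : Fin n) ≠ 0 := by
  intro h
  have h2 := congrArg Fin.val h
  rw [Fin.val_add, Fin.val_one', Fin.val_zero, Nat.mod_eq_of_lt (show 1 < n by omega),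
    Nat.mod_eq_of_lt (show 1 + 1 < n by omega)] at h2
  omega

lemma add_one_ne_self (hn : 3 ≤ n) (i : Fin n) : i + 1 ≠ i := by
  intro h
  exact one_ne_zero' hn (add_eq_left.mp h)

lemma wE_inj (i j : Fin n) (h : wE i = wE j) : i = j := by
  rw [Sym2.eq_iff] at h
  rcases h with ⟨h1, _⟩ | ⟨h1, h2⟩
  · exact Sum.inl_injective h1
  · simp at h1

lemma cE_inj (hn : 3 ≤ n) {i j : Fin n} (h : cE i = cE j) : i = j := by
  rw [Sym2.eq_iff] at h
  rcases h with ⟨h1, _⟩ | ⟨h1, h2⟩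
  · exact Sum.inl_injective h1
  · have e1 : i = j + 1 := Sum.inl_injective h1
    have e2 : i + 1 = j := Sum.inl_injective h2
    rw [e1] at e2
    exact absurd (add_eq_left.mp (by rw [← add_assoc]; exact e2))
      (two_ne_zero' hn)

lemma wE_ne_cE (i j : Fin n) : wE i ≠ cE j := by
  intro h
  rw [Sym2.eq_iff] at h
  rcases h with ⟨h1, h2⟩ | ⟨h1, h2⟩ <;> simp at h1 h2



lemma val_add_one (hn : 3 ≤ n) (i : Fin n) :
    ((i+1 : Fin n) : ℕ) = if (i:ℕ) = n - 1 then 0 else (i:ℕ)+1 := by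
  rw [Fin.val_add, Fin.val_one', Nat.mod_eq_of_lt (show 1 < n by omega)]
  have hi := i.isLt
  split
  · next h => rw [h, Nat.sub_add_cancel (by omega), Nat.mod_self]
  · next h => exact Nat.mod_eq_of_lt (by omega)

lemma wE_mem (hn : 3 ≤ n) (i : Fin n) : wE i ∈ (whiskeredCycle n).edgeSet := by
  rw [SimpleGraph.mem_edgeSet, whiskeredCycle, SimpleGraph.fromRel_adj]
  exact ⟨by simp, Or.inl rfl⟩

lemma cE_mem (hn : 3 ≤ n) (i : Fin n) : cE i ∈ (whiskeredCycle n).edgeSet := by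
  rw [SimpleGraph.mem_edgeSet, whiskeredCycle, SimpleGraph.fromRel_adj]
  refine ⟨fun h => add_one_ne_self hn i (Sum.inl_injective h).symm, Or.inl ?_⟩
  show ((i+1 : Fin n) : ℕ) = (i:ℕ) + 1 ∨ _
  rw [val_add_one hn]
  split
  · next h => exact Or.inr ⟨h, rfl⟩
  · next h => exact Or.inl rfl

lemma edge_class (hn : 3 ≤ n) {e : Sym2 (Fin n ⊕ Fin n)}
    (he : e ∈ (whiskeredCycle n).edgeSet) :
    (∃ i, e = wE i) ∨ (∃ i, e = cE i) := by
  induction e using Sym2.ind with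
  | _ a b =>
    rw [SimpleGraph.mem_edgeSet, whiskeredCycle, SimpleGraph.fromRel_adj] at he
    obtain ⟨hne, hr⟩ := he
    have key : ∀ i j : Fin n,
        ((j : ℕ) = (i : ℕ) + 1 ∨ ((i : ℕ) = n - 1 ∧ (j : ℕ) = 0)) → j = i + 1 := by
      intro i j h
      apply Fin.ext
      rw [val_add_one hn]
      rcases h with h | ⟨h1, h2⟩
      · rw [if_neg]; omega
        intro hh; have := j.isLt; omega
      · rw [if_pos h1]; exact h2
    rcases a with i | i <;> rcases b with j | j
    · rcases hr with h | h
      · right; exact ⟨i, by rw [key i j h]⟩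
      · right; exact ⟨j, by rw [Sym2.eq_swap]; rw [key j i h]⟩
    · left
      refine ⟨i, ?_⟩
      rcases hr with h | h
      · rw [show i = j from h]
      · exact absurd h (by simp)
    · left
      refine ⟨j, ?_⟩
      rcases hr with h | h
      · exact absurd h (by simp)
      · rw [Sym2.eq_swap, show j = i from h]
    · rcases hr with h | h <;> exact absurd h (by simp)

lemma inl_mem_edge (hn : 3 ≤ n) {e : Sym2 (Fin n ⊕ Fin n)}
    (he : e ∈ (whiskeredCycle n).edgeSet) {i : Fin n} (hi : Sum.inl i ∈ e) :
    e = wE i ∨ e = cE i ∨ e = cE (i - 1) := by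
  rcases edge_class hn he with ⟨k, rfl⟩ | ⟨k, rfl⟩
  · left
    rw [Sym2.mem_iff] at hi
    rcases hi with h | h
    · rw [Sum.inl.injEq] at h; rw [← h]
    · simp at h
  · right
    rw [Sym2.mem_iff] at hi
    rcases hi with h | h
    · rw [Sum.inl.injEq] at h; left; rw [← h]
    · rw [Sum.inl.injEq] at h
      right
      have : k = i - 1 := by rw [h, add_sub_cancel_right]
      rw [this]

lemma inr_mem_edge (hn : 3 ≤ n) {e : Sym2 (Fin n ⊕ Fin n)}
    (he : e ∈ (whiskeredCycle n).edgeSet) {i : Fin n} (hi : Sum.inr i ∈ e) :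
    e = wE i := by
  rcases edge_class hn he with ⟨k, rfl⟩ | ⟨k, rfl⟩
  · rw [Sym2.mem_iff] at hi
    rcases hi with h | h
    · simp at h
    · rw [Sum.inr.injEq] at h; rw [← h]
  · rw [Sym2.mem_iff] at hi
    rcases hi with h | h <;> simp at h

lemma sub_one_ne_self (hn : 3 ≤ n) (j : Fin n) : j - 1 ≠ j := by
  intro h
  exact one_ne_zero' hn (sub_eq_self.mp h)

lemma inl_mem_wE (i : Fin n) : Sum.inl i ∈ wE i := by simp

lemma inl_mem_cE_self (i : Fin n) : Sum.inl i ∈ cE i := by simp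

lemma inl_mem_cE_pred (i : Fin n) : Sum.inl i ∈ cE (i - 1) := by
  rw [Sym2.mem_iff]
  right
  rw [sub_add_cancel]

lemma card_le_two_of_subset_pair {α : Type*} [DecidableEq α] {S : Finset α} {a b : α}
    (h : S ⊆ {a, b}) : S.card ≤ 2 :=
  le_trans (Finset.card_le_card h) (le_trans (Finset.card_insert_le _ _) (by simp))

lemma face_iff (hn : 3 ≤ n) (H : Finset (Sym2 (Fin n ⊕ Fin n))) :
    H ∈ (M2 (whiskeredCycle n)).faces ↔
      ((∀ e ∈ H, e ∈ (whiskeredCycle n).edgeSet) ∧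
        ∀ j : Fin n, ¬(wE j ∈ H ∧ cE (j-1) ∈ H ∧ cE j ∈ H)) := by
  constructor
  · rintro ⟨hsub, hdeg⟩
    refine ⟨fun e he => hsub he, fun j ⟨h1, h2, h3⟩ => ?_⟩
    have hT : ({wE j, cE (j-1), cE j} : Finset (Sym2 (Fin n ⊕ Fin n))) ⊆
        H.filter (fun e => Sum.inl j ∈ e) := by
      intro e he
      simp only [Finset.mem_insert, Finset.mem_singleton] at he
      rw [Finset.mem_filter]
      rcases he with rfl | rfl | rfl
      · exact ⟨h1, inl_mem_wE j⟩
      · exact ⟨h2, inl_mem_cE_pred j⟩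
      · exact ⟨h3, inl_mem_cE_self j⟩
    have hcard : ({wE j, cE (j-1), cE j} : Finset (Sym2 (Fin n ⊕ Fin n))).card = 3 := by
      rw [Finset.card_insert_of_notMem, Finset.card_insert_of_notMem, Finset.card_singleton]
      · rw [Finset.mem_singleton]
        intro h
        exact sub_one_ne_self hn j (cE_inj hn h)
      · rw [Finset.mem_insert, Finset.mem_singleton]
        rintro (h | h) <;> exact wE_ne_cE _ _ h
    have := le_trans (hcard ▸ Finset.card_le_card hT) (hdeg (Sum.inl j))
    omega
  · rintro ⟨hsub, htrip⟩
    refine ⟨fun e he => hsub e he, fun v => ?_⟩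
    rcases v with i | i
    · have h3 := htrip i
      by_cases hw : wE i ∈ H
      · by_cases hp : cE (i-1) ∈ H
        · have hc : cE i ∉ H := fun hc => h3 ⟨hw, hp, hc⟩
          apply card_le_two_of_subset_pair (a := wE i) (b := cE (i-1))
          intro e he
          rw [Finset.mem_filter] at he
          rcases inl_mem_edge hn (hsub e he.1) he.2 with rfl | rfl | rfl
          · simp
          · exact absurd he.1 hc
          · simp
        · apply card_le_two_of_subset_pair (a := wE i) (b := cE i)
          intro e he
          rw [Finset.mem_filter] at he
          rcases inl_mem_edge hn (hsub e he.1) he.2 with rfl | rfl | rfl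
          · simp
          · simp
          · exact absurd he.1 hp
      · apply card_le_two_of_subset_pair (a := cE (i-1)) (b := cE i)
        intro e he
        rw [Finset.mem_filter] at he
        rcases inl_mem_edge hn (hsub e he.1) he.2 with rfl | rfl | rfl
        · exact absurd he.1 hw
        · simp
        · simp
    · refine le_trans (Finset.card_le_card (fun e he => ?_)) (?_ : ({wE i} : Finset _).card ≤ 2)
      · rw [Finset.mem_filter] at he
        rw [Finset.mem_singleton]
        exact inr_mem_edge hn (hsub e he.1) he.2
      · simp

abbrev Rl (n : ℕ) [NeZero n] := realization (M2 (whiskeredCycle n))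

def Xc (f : Sym2 (Fin n ⊕ Fin n) → ℝ) (i : Fin n) : ℝ := f (wE i)
def Yc (f : Sym2 (Fin n ⊕ Fin n) → ℝ) (i : Fin n) : ℝ := f (cE i)
def mc (f : Sym2 (Fin n ⊕ Fin n) → ℝ) (i : Fin n) : ℝ := min (Xc f i) (Yc f i)
def Gc (f : Sym2 (Fin n ⊕ Fin n) → ℝ) (i : Fin n) : ℝ := Xc f i - Yc f i + mc f (i+1)

def suppF (f : Sym2 (Fin n ⊕ Fin n) → ℝ) : Finset (Sym2 (Fin n ⊕ Fin n)) :=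
  Finset.univ.filter (fun e => f e ≠ 0)

lemma mem_suppF {f : Sym2 (Fin n ⊕ Fin n) → ℝ} {e : Sym2 (Fin n ⊕ Fin n)} :
    e ∈ suppF f ↔ f e ≠ 0 := by
  rw [suppF, Finset.mem_filter]; simp

lemma suppF_face (x : Rl n) : suppF x.val ∈ (M2 (whiskeredCycle n)).faces := by
  obtain ⟨σ, hσ, hsupp⟩ := x.2.2.2
  exact (M2 (whiskeredCycle n)).down_closed hσ (fun e he => hsupp e (mem_suppF.mp he))

lemma suppF_subset_edges (x : Rl n) :
    ∀ e ∈ suppF x.val, e ∈ (whiskeredCycle n).edgeSet := by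
  intro e he
  exact (suppF_face x).1 (Finset.mem_coe.mpr he)

lemma keyA (hn : 3 ≤ n) (x : Rl n) (j : Fin n) :
    ¬(0 < Xc x.val j ∧ 0 < Yc x.val (j-1) ∧ 0 < Yc x.val j) := by
  rintro ⟨h1, h2, h3⟩
  have hface := (face_iff hn _).mp (suppF_face x)
  exact hface.2 j ⟨mem_suppF.mpr (ne_of_gt h1), mem_suppF.mpr (ne_of_gt h2),
    mem_suppF.mpr (ne_of_gt h3)⟩

lemma keyB (hn : 3 ≤ n) (x : Rl n) (j : Fin n) (h : 0 < mc x.val (j+1)) :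
    Yc x.val j = 0 := by
  rw [mc, lt_min_iff] at h
  have hA := keyA hn x (j+1)
  rw [add_sub_cancel_right] at hA
  have : ¬ 0 < Yc x.val j := fun hy => hA ⟨h.1, hy, h.2⟩
  exact le_antisymm (not_lt.mp this) (x.2.1 _)

lemma mc_nonneg (x : Rl n) (i : Fin n) : 0 ≤ mc x.val i :=
  le_min (x.2.1 _) (x.2.1 _)

lemma keyC (hn : 3 ≤ n) (x : Rl n) : ∃ i, Gc x.val i ≠ 0 := by
  by_contra hcon
  push_neg at hcon
  have hm : ∀ i, mc x.val i = 0 := by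
    intro i
    by_contra hmi
    have hmi' : 0 < mc x.val i := lt_of_le_of_ne (mc_nonneg x i) (Ne.symm hmi)
    have hji : (i - 1) + 1 = i := sub_add_cancel i 1
    have hy : Yc x.val (i-1) = 0 := keyB hn x (i-1) (by rw [hji]; exact hmi')
    have hG := hcon (i-1)
    rw [Gc, hji, hy] at hG
    have := x.2.1 (wE (i-1))
    have : (0:ℝ) < Xc x.val (i-1) - 0 + mc x.val i := by
      have := x.2.1 (wE (i-1)); show (0:ℝ) < _; unfold Xc; linarith [hmi']
    rw [hG] at this; exact lt_irrefl 0 this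
  have hXY : ∀ i, Xc x.val i = 0 ∧ Yc x.val i = 0 := by
    intro i
    have hG := hcon i
    rw [Gc, hm (i+1), add_zero, sub_eq_zero] at hG
    have := hm i
    rw [mc, hG, min_self] at this
    exact ⟨hG.trans this, this⟩
  have hzero : ∀ e, x.val e = 0 := by
    intro e
    by_contra he
    have hedge := suppF_subset_edges x e (mem_suppF.mpr he)
    rcases edge_class hn hedge with ⟨i, rfl⟩ | ⟨i, rfl⟩
    · exact he (hXY i).1
    · exact he (hXY i).2
  have hsum := x.2.2.1
  rw [Finset.sum_congr rfl (fun e _ => hzero e), Finset.sum_const_zero] at hsum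
  exact one_ne_zero hsum.symm

def sigG (f : Sym2 (Fin n ⊕ Fin n) → ℝ) : Finset (Sym2 (Fin n ⊕ Fin n)) :=
  ((Finset.univ.filter (fun i => 0 < Gc f i)).image wE) ∪
    ((Finset.univ.filter (fun i => Gc f i < 0)).image cE)

lemma wE_mem_sigG (hn : 3 ≤ n) {f : Sym2 (Fin n ⊕ Fin n) → ℝ} {j : Fin n} :
    wE j ∈ sigG f ↔ 0 < Gc f j := by
  rw [sigG, Finset.mem_union]
  constructor
  · rintro (h | h) <;> rw [Finset.mem_image] at h <;> obtain ⟨i, hi, he⟩ := h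
    · rw [wE_inj i j he] at hi; exact (Finset.mem_filter.mp hi).2
    · exact absurd he.symm (wE_ne_cE j i)
  · intro h
    exact Or.inl (Finset.mem_image.mpr ⟨j, Finset.mem_filter.mpr ⟨Finset.mem_univ j, h⟩, rfl⟩)

lemma cE_mem_sigG (hn : 3 ≤ n) {f : Sym2 (Fin n ⊕ Fin n) → ℝ} {j : Fin n} :
    cE j ∈ sigG f ↔ Gc f j < 0 := by
  rw [sigG, Finset.mem_union]
  constructor
  · rintro (h | h) <;> rw [Finset.mem_image] at h <;> obtain ⟨i, hi, he⟩ := h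
    · exact absurd he (wE_ne_cE i j)
    · rw [cE_inj hn he] at hi; exact (Finset.mem_filter.mp hi).2
  · intro h
    exact Or.inr (Finset.mem_image.mpr ⟨j, Finset.mem_filter.mpr ⟨Finset.mem_univ j, h⟩, rfl⟩)

lemma U_face (hn : 3 ≤ n) (x : Rl n) :
    suppF x.val ∪ sigG x.val ∈ (M2 (whiskeredCycle n)).faces := by
  rw [face_iff hn]
  constructor
  · intro e he
    rcases Finset.mem_union.mp he with h | h
    · exact suppF_subset_edges x e h
    · rcases Finset.mem_union.mp h with h' | h' <;> rw [Finset.mem_image] at h' <;>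
        obtain ⟨i, _, rfl⟩ := h'
      · exact wE_mem hn i
      · exact cE_mem hn i
  · rintro j ⟨h1, h2, h3⟩
    have hnn := x.2.1
    have h1' : 0 < Xc x.val j ∨ 0 < Gc x.val j := by
      rcases Finset.mem_union.mp h1 with h | h
      · exact Or.inl (lt_of_le_of_ne (hnn _) (Ne.symm (mem_suppF.mp h)))
      · exact Or.inr ((wE_mem_sigG hn).mp h)
    have h2' : 0 < Yc x.val (j-1) ∨ Gc x.val (j-1) < 0 := by
      rcases Finset.mem_union.mp h2 with h | h
      · exact Or.inl (lt_of_le_of_ne (hnn _) (Ne.symm (mem_suppF.mp h)))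
      · exact Or.inr ((cE_mem_sigG hn).mp h)
    have h3' : 0 < Yc x.val j ∨ Gc x.val j < 0 := by
      rcases Finset.mem_union.mp h3 with h | h
      · exact Or.inl (lt_of_le_of_ne (hnn _) (Ne.symm (mem_suppF.mp h)))
      · exact Or.inr ((cE_mem_sigG hn).mp h)
    by_cases hx : 0 < Xc x.val j
    · by_cases hyj : 0 < Yc x.val j
      · have hym : ¬ 0 < Yc x.val (j-1) := fun hy => keyA hn x j ⟨hx, hy, hyj⟩
        have hy0 : Yc x.val (j-1) = 0 := le_antisymm (not_lt.mp hym) (hnn _)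
        have hG : Gc x.val (j-1) < 0 := h2'.resolve_left hym
        rw [Gc, sub_add_cancel, hy0] at hG
        have hmj : 0 < mc x.val j := lt_min hx hyj
        have hXn : (0:ℝ) ≤ Xc x.val (j-1) := hnn _
        linarith
      · have hG : Gc x.val j < 0 := h3'.resolve_left hyj
        have hy0 : Yc x.val j = 0 := le_antisymm (not_lt.mp hyj) (hnn _)
        rw [Gc, hy0] at hG
        have := mc_nonneg x (j+1)
        linarith
    · have hX0 : Xc x.val j = 0 := le_antisymm (not_lt.mp hx) (hnn _)
      have hGj : 0 < Gc x.val j := h1'.resolve_left hx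
      have hYnn : (0:ℝ) ≤ Yc x.val j := hnn _
      have hmc : 0 < mc x.val (j+1) := by rw [Gc, hX0] at hGj; linarith
      have hyj0 : Yc x.val j = 0 := keyB hn x j hmc
      rcases h3' with h | h
      · rw [hyj0] at h; exact lt_irrefl 0 h
      · exact absurd hGj (not_lt.mpr (le_of_lt h))

def Edges : Finset (Sym2 (Fin n ⊕ Fin n)) :=
  (Finset.univ.image (wE (n := n))) ∪ (Finset.univ.image (cE (n := n)))

lemma sum_XY (hn : 3 ≤ n) (x : Rl n) :
    ((∑ i, Xc x.val i) + (∑ i, Yc x.val i)) = 1 := by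
  have hvan : ∀ e ∈ (Finset.univ : Finset (Sym2 (Fin n ⊕ Fin n))), e ∉ Edges → x.val e = 0 := by
    intro e _ he
    by_contra hne
    rcases edge_class hn (suppF_subset_edges x e (mem_suppF.mpr hne)) with ⟨i, rfl⟩ | ⟨i, rfl⟩
    · exact he (Finset.mem_union_left _ (Finset.mem_image_of_mem _ (Finset.mem_univ i)))
    · exact he (Finset.mem_union_right _ (Finset.mem_image_of_mem _ (Finset.mem_univ i)))
  have hdisj : Disjoint (Finset.univ.image (wE (n := n))) (Finset.univ.image (cE (n := n))) := by
    rw [Finset.disjoint_left]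
    rintro e he1 he2
    rw [Finset.mem_image] at he1 he2
    obtain ⟨i, _, rfl⟩ := he1
    obtain ⟨j, _, hj⟩ := he2
    exact wE_ne_cE i j hj.symm
  have h1 : ∑ e ∈ Edges, x.val e = 1 := by
    rw [Finset.sum_subset (Finset.subset_univ Edges) hvan]
    exact x.2.2.1
  rw [Edges, Finset.sum_union hdisj,
    Finset.sum_image (fun a _ b _ h => wE_inj a b h),
    Finset.sum_image (fun a _ b _ h => cE_inj hn h)] at h1
  exact h1

def Nu (u : Fin n → ℝ) : ℝ := ∑ i, |u i|

def sF (u : Fin n → ℝ) : Sym2 (Fin n ⊕ Fin n) → ℝ := fun e =>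
  ((∑ i, if e = wE i then max (u i) 0 else 0) +
    (∑ i, if e = cE i then max (-u i) 0 else 0)) / Nu u

lemma sF_wE (hn : 3 ≤ n) (u : Fin n → ℝ) (j : Fin n) :
    sF u (wE j) = max (u j) 0 / Nu u := by
  rw [sF]
  congr 1
  have e1 : (∑ i, if wE j = wE i then max (u i) 0 else 0) = max (u j) 0 := by
    rw [Finset.sum_congr rfl (fun i _ => if_congr
      ⟨fun h => wE_inj j i h, fun h => by rw [h]⟩ rfl rfl)]
    rw [Finset.sum_ite_eq]
    simp
  have e2 : (∑ i, if wE j = cE i then max (-u i) 0 else 0) = 0 := by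
    apply Finset.sum_eq_zero
    intro i _
    rw [if_neg (wE_ne_cE j i)]
  rw [e1, e2, add_zero]

lemma sF_cE (hn : 3 ≤ n) (u : Fin n → ℝ) (j : Fin n) :
    sF u (cE j) = max (-u j) 0 / Nu u := by
  rw [sF]
  congr 1
  have e1 : (∑ i, if cE j = wE i then max (u i) 0 else 0) = 0 := by
    apply Finset.sum_eq_zero
    intro i _
    rw [if_neg (fun h => wE_ne_cE i j h.symm)]
  have e2 : (∑ i, if cE j = cE i then max (-u i) 0 else 0) = max (-u j) 0 := by
    rw [Finset.sum_congr rfl (fun i _ => if_congr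
      ⟨fun h => cE_inj hn h, fun h => by rw [h]⟩ rfl rfl)]
    rw [Finset.sum_ite_eq]
    simp
  rw [e1, e2, zero_add]

def sigU (u : Fin n → ℝ) : Finset (Sym2 (Fin n ⊕ Fin n)) :=
  ((Finset.univ.filter (fun i => 0 < u i)).image wE) ∪
    ((Finset.univ.filter (fun i => u i < 0)).image cE)

lemma wE_mem_sigU (hn : 3 ≤ n) {u : Fin n → ℝ} {j : Fin n} :
    wE j ∈ sigU u ↔ 0 < u j := by
  rw [sigU, Finset.mem_union]
  constructor
  · rintro (h | h) <;> rw [Finset.mem_image] at h <;> obtain ⟨i, hi, he⟩ := h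
    · rw [wE_inj i j he] at hi; exact (Finset.mem_filter.mp hi).2
    · exact absurd he.symm (wE_ne_cE j i)
  · intro h
    exact Or.inl (Finset.mem_image.mpr ⟨j, Finset.mem_filter.mpr ⟨Finset.mem_univ j, h⟩, rfl⟩)

lemma cE_mem_sigU (hn : 3 ≤ n) {u : Fin n → ℝ} {j : Fin n} :
    cE j ∈ sigU u ↔ u j < 0 := by
  rw [sigU, Finset.mem_union]
  constructor
  · rintro (h | h) <;> rw [Finset.mem_image] at h <;> obtain ⟨i, hi, he⟩ := h
    · exact absurd he (wE_ne_cE i j)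
    · rw [cE_inj hn he] at hi; exact (Finset.mem_filter.mp hi).2
  · intro h
    exact Or.inr (Finset.mem_image.mpr ⟨j, Finset.mem_filter.mpr ⟨Finset.mem_univ j, h⟩, rfl⟩)

lemma sigU_face (hn : 3 ≤ n) (u : Fin n → ℝ) : sigU u ∈ (M2 (whiskeredCycle n)).faces := by
  rw [face_iff hn]
  constructor
  · intro e he
    rcases Finset.mem_union.mp he with h | h <;> rw [Finset.mem_image] at h <;>
      obtain ⟨i, _, rfl⟩ := h
    · exact wE_mem hn i
    · exact cE_mem hn i
  · rintro j ⟨h1, _, h3⟩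
    have := (wE_mem_sigU hn).mp h1
    have := (cE_mem_sigU hn).mp h3
    linarith

lemma sF_supp (hn : 3 ≤ n) (u : Fin n → ℝ) :
    ∀ e, sF u e ≠ 0 → e ∈ sigU u := by
  intro e he
  rw [sF, div_ne_zero_iff] at he
  have hnum := he.1
  have hA : (0:ℝ) ≤ ∑ i, if e = wE i then max (u i) 0 else 0 :=
    Finset.sum_nonneg (fun i _ => by split <;> simp [le_max_right])
  have hB : (0:ℝ) ≤ ∑ i, if e = cE i then max (-u i) 0 else 0 :=
    Finset.sum_nonneg (fun i _ => by split <;> simp [le_max_right])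
  rcases (by rcases eq_or_ne (∑ i, if e = wE i then max (u i) 0 else 0) 0 with h | h
             · right; intro hB0; exact hnum (by rw [h, hB0, add_zero]
               )
             · left; exact h :
      (∑ i, if e = wE i then max (u i) 0 else 0) ≠ 0 ∨
        (∑ i, if e = cE i then max (-u i) 0 else 0) ≠ 0) with h | h
  · obtain ⟨i, _, hi⟩ := Finset.exists_ne_zero_of_sum_ne_zero h
    by_cases hei : e = wE i
    · rw [if_pos hei] at hi
      have hui : 0 < u i := by
        by_contra hcon
        exact hi (max_eq_right (not_lt.mp hcon))
      rw [hei]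
      exact (wE_mem_sigU hn).mpr hui
    · rw [if_neg hei] at hi; exact absurd rfl hi
  · obtain ⟨i, _, hi⟩ := Finset.exists_ne_zero_of_sum_ne_zero h
    by_cases hei : e = cE i
    · rw [if_pos hei] at hi
      have hui : u i < 0 := by
        by_contra hcon
        exact hi (max_eq_right (neg_nonpos.mpr (not_lt.mp hcon)))
      rw [hei]
      exact (cE_mem_sigU hn).mpr hui
    · rw [if_neg hei] at hi; exact absurd rfl hi

lemma sF_nonneg (u : Fin n → ℝ) (hNu : 0 < Nu u) : ∀ e, 0 ≤ sF u e := by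
  intro e
  apply div_nonneg _ (le_of_lt hNu)
  apply add_nonneg <;> exact Finset.sum_nonneg (fun i _ => by split <;> simp [le_max_right])

lemma sF_sum (hn : 3 ≤ n) (u : Fin n → ℝ) (hNu : 0 < Nu u) :
    ∑ e, sF u e = 1 := by
  simp only [sF]
  rw [← Finset.sum_div]
  rw [div_eq_one_iff_eq (ne_of_gt hNu)]
  rw [Finset.sum_add_distrib]
  rw [Finset.sum_comm, Finset.sum_comm (s := Finset.univ (α := Sym2 (Fin n ⊕ Fin n)))]
  have e1 : ∀ i : Fin n, (∑ e : Sym2 (Fin n ⊕ Fin n), if e = wE i then max (u i) 0 else 0)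
      = max (u i) 0 := by
    intro i
    rw [Finset.sum_ite_eq' Finset.univ (wE i) (fun _ => max (u i) 0)]
    simp
  have e2 : ∀ i : Fin n, (∑ e : Sym2 (Fin n ⊕ Fin n), if e = cE i then max (-u i) 0 else 0)
      = max (-u i) 0 := by
    intro i
    rw [Finset.sum_ite_eq' Finset.univ (cE i) (fun _ => max (-u i) 0)]
    simp
  rw [Finset.sum_congr rfl (fun i _ => e1 i), Finset.sum_congr rfl (fun i _ => e2 i)]
  rw [← Finset.sum_add_distrib]
  rw [Nu]
  exact Finset.sum_congr rfl (fun i _ => max_zero_add_max_neg_zero_eq_abs_self (u i))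

def sPt (hn : 3 ≤ n) (u : Fin n → ℝ) (hNu : 0 < Nu u) : Rl n :=
  ⟨sF u, sF_nonneg u hNu, sF_sum hn u hNu, sigU u, sigU_face hn u, sF_supp hn u⟩

lemma min_pos_neg (a : ℝ) : min (max a 0) (max (-a) 0) = 0 := by
  rcases le_total a 0 with h | h
  · rw [max_eq_right h]
    exact min_eq_left (le_max_right _ _)
  · rw [max_eq_right (neg_nonpos.mpr h)]
    exact min_eq_right (le_max_right _ _)

lemma Gc_sF (hn : 3 ≤ n) (u : Fin n → ℝ) (hNu : 0 < Nu u) (i : Fin n) :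
    Gc (sF u) i = u i / Nu u := by
  rw [Gc, Xc, Yc, mc, Xc, Yc, sF_wE hn, sF_cE hn, sF_wE hn, sF_cE hn]
  rw [div_sub_div_same, max_zero_sub_max_neg_zero_eq_self]
  rw [min_div_div_right (le_of_lt hNu), min_pos_neg, zero_div, add_zero]

abbrev Eu (n : ℕ) := EuclideanSpace ℝ (Fin n)
abbrev Sph (n : ℕ) := Metric.sphere (0 : Eu n) 1

def Gv (x : Rl n) : Eu n := (WithLp.equiv 2 (Fin n → ℝ)).symm (fun i => Gc x.val i)

lemma Gv_coords (x : Rl n) (i : Fin n) :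
    WithLp.equiv 2 (Fin n → ℝ) (Gv x) i = Gc x.val i := by
  rw [Gv, Equiv.apply_symm_apply]

lemma Gv_ne_zero (hn : 3 ≤ n) (x : Rl n) : Gv x ≠ 0 := by
  obtain ⟨i, hi⟩ := keyC hn x
  intro h
  apply hi
  have h2 := congrArg (fun v => WithLp.equiv 2 (Fin n → ℝ) v i) h
  change WithLp.equiv 2 (Fin n → ℝ) (Gv x) i = WithLp.equiv 2 (Fin n → ℝ) 0 i at h2
  rw [Gv_coords] at h2
  rw [h2]
  rfl

lemma norm_Gv_pos (hn : 3 ≤ n) (x : Rl n) : 0 < ‖Gv x‖ :=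
  norm_pos_iff.mpr (Gv_ne_zero hn x)

def pE (x : Rl n) : Eu n := ‖Gv x‖⁻¹ • Gv x

def pv (x : Rl n) : Fin n → ℝ := fun i => ‖Gv x‖⁻¹ * Gc x.val i

lemma pE_coords (x : Rl n) : WithLp.equiv 2 (Fin n → ℝ) (pE x) = pv x := by
  funext i
  rw [pE, (show ∀ (c : ℝ) (v : Eu n), WithLp.equiv 2 (Fin n → ℝ) (c • v) = c • WithLp.equiv 2 (Fin n → ℝ) v from fun _ _ => rfl), Pi.smul_apply, Gv_coords, smul_eq_mul, pv]

lemma pE_mem_sphere (hn : 3 ≤ n) (x : Rl n) : pE x ∈ Sph n := by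
  rw [mem_sphere_zero_iff_norm, pE, norm_smul, norm_inv, norm_norm]
  exact inv_mul_cancel₀ (ne_of_gt (norm_Gv_pos hn x))

def pMap (hn : 3 ≤ n) (x : Rl n) : Sph n := ⟨pE x, pE_mem_sphere hn x⟩

lemma cont_coord (e : Sym2 (Fin n ⊕ Fin n)) : Continuous fun x : Rl n => x.val e :=
  (continuous_apply e).comp continuous_subtype_val

lemma cont_Gc (i : Fin n) : Continuous fun x : Rl n => Gc x.val i := by
  unfold Gc Xc Yc mc Xc Yc
  exact ((cont_coord _).sub (cont_coord _)).add ((cont_coord _).min (cont_coord _))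

lemma cont_Gv : Continuous (Gv (n := n)) := by
  have : Gv (n := n) = (PiLp.continuousLinearEquiv 2 ℝ (fun _ : Fin n => ℝ)).symm ∘
      (fun x (i : Fin n) => Gc x.val i) := rfl
  rw [this]
  exact (PiLp.continuousLinearEquiv 2 ℝ (fun _ : Fin n => ℝ)).symm.continuous.comp
    (continuous_pi (fun i => cont_Gc i))

lemma cont_pMap (hn : 3 ≤ n) : Continuous (pMap hn (n := n)) := by
  apply Continuous.subtype_mk
  exact ((cont_Gv.norm.inv₀ (fun x => ne_of_gt (norm_Gv_pos hn x))).smul cont_Gv)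

def uf (u : Sph n) : Fin n → ℝ := WithLp.equiv 2 (Fin n → ℝ) u.val

lemma Nu_pos (u : Sph n) : 0 < Nu (uf u) := by
  have hnorm : ‖u.val‖ = 1 := mem_sphere_zero_iff_norm.mp u.2
  have hne : u.val ≠ 0 := by
    intro h; rw [h, norm_zero] at hnorm; exact one_ne_zero hnorm.symm
  have : ∃ i, uf u i ≠ 0 := by
    by_contra hcon
    push_neg at hcon
    apply hne
    have : uf u = 0 := funext hcon
    have h2 := congrArg (WithLp.equiv 2 (Fin n → ℝ)).symm this
    rw [uf, Equiv.symm_apply_apply] at h2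
    rw [h2]; rfl
  obtain ⟨i, hi⟩ := this
  have h1 : |uf u i| ≤ Nu (uf u) :=
    Finset.single_le_sum (f := fun j => |uf u j|) (fun j _ => abs_nonneg _) (Finset.mem_univ i)
  exact lt_of_lt_of_le (abs_pos.mpr hi) h1

def sMap (hn : 3 ≤ n) (u : Sph n) : Rl n := sPt hn (uf u) (Nu_pos u)

lemma Gv_sMap (hn : 3 ≤ n) (u : Sph n) :
    Gv (sMap hn u) = (Nu (uf u))⁻¹ • u.val := by
  apply (WithLp.equiv 2 (Fin n → ℝ)).injective
  rw [Gv, Equiv.apply_symm_apply, (show ∀ (c : ℝ) (v : Eu n), WithLp.equiv 2 (Fin n → ℝ) (c • v) = c • WithLp.equiv 2 (Fin n → ℝ) v from fun _ _ => rfl)]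
  funext i
  rw [Pi.smul_apply, smul_eq_mul]
  show Gc (sF (uf u)) i = _
  rw [Gc_sF hn _ (Nu_pos u), div_eq_inv_mul]
  rfl

lemma p_s_id (hn : 3 ≤ n) (u : Sph n) : pMap hn (sMap hn u) = u := by
  apply Subtype.ext
  show pE (sMap hn u) = u.val
  have hnorm : ‖u.val‖ = 1 := mem_sphere_zero_iff_norm.mp u.2
  have hNu := Nu_pos u
  rw [pE, Gv_sMap hn u, norm_smul, norm_inv, Real.norm_eq_abs, abs_of_pos hNu, hnorm,
    mul_one, inv_inv, smul_smul, mul_inv_cancel₀ (ne_of_gt hNu), one_smul]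

lemma cont_uf (i : Fin n) : Continuous fun u : Sph n => uf u i := by
  have : (fun u : Sph n => uf u i) =
      (fun v : Fin n → ℝ => v i) ∘ ((PiLp.continuousLinearEquiv 2 ℝ (fun _ : Fin n => ℝ)) ∘
        Subtype.val) := rfl
  rw [this]
  exact (continuous_apply i).comp
    ((PiLp.continuousLinearEquiv 2 ℝ (fun _ : Fin n => ℝ)).continuous.comp continuous_subtype_val)

lemma cont_sMap (hn : 3 ≤ n) : Continuous (sMap hn (n := n)) := by
  apply Continuous.subtype_mk
  apply continuous_pi
  intro e
  show Continuous fun u : Sph n => sF (uf u) e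
  simp only [sF, Nu]
  apply Continuous.div
  · apply Continuous.add <;> apply continuous_finset_sum <;> intro i _
    · by_cases h : e = wE i
      · simp only [if_pos h]; exact (cont_uf i).max continuous_const
      · simp only [if_neg h]; exact continuous_const
    · by_cases h : e = cE i
      · simp only [if_pos h]; exact ((cont_uf i).neg).max continuous_const
      · simp only [if_neg h]; exact continuous_const
  · exact continuous_finset_sum _ (fun i _ => (cont_uf i).abs)
  · intro u
    exact ne_of_gt (Nu_pos u)

lemma mul_pos_cancel {c g : ℝ} (hc : 0 < c) : 0 < c * g ↔ 0 < g :=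
  ⟨fun h => by nlinarith, fun h => mul_pos hc h⟩

lemma mul_neg_cancel' {c g : ℝ} (hc : 0 < c) : c * g < 0 ↔ g < 0 :=
  ⟨fun h => by nlinarith, fun h => mul_neg_of_pos_of_neg hc h⟩

lemma uf_pMap (hn : 3 ≤ n) (x : Rl n) : uf (pMap hn x) = pv x := pE_coords x

lemma sigU_pv_subset (hn : 3 ≤ n) (x : Rl n) : sigU (pv x) ⊆ sigG x.val := by
  intro e he
  have hc : 0 < ‖Gv x‖⁻¹ := inv_pos.mpr (norm_Gv_pos hn x)
  rcases Finset.mem_union.mp he with h | h <;> rw [Finset.mem_image] at h <;>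
    obtain ⟨i, hi, rfl⟩ := h <;> rw [Finset.mem_filter] at hi
  · exact (wE_mem_sigG hn).mpr ((mul_pos_cancel hc).mp hi.2)
  · exact (cE_mem_sigG hn).mpr ((mul_neg_cancel' hc).mp hi.2)

def hPt (hn : 3 ≤ n) (t : ℝ) (ht0 : 0 ≤ t) (ht1 : t ≤ 1) (x : Rl n) : Rl n :=
  ⟨fun e => (1-t) * (sMap hn (pMap hn x)).val e + t * x.val e, by
    constructor
    · intro e
      have h1 := (sMap hn (pMap hn x)).2.1 e
      have h2 := x.2.1 e
      have : (0:ℝ) ≤ 1 - t := by linarith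
      positivity
    constructor
    · rw [Finset.sum_add_distrib, ← Finset.mul_sum, ← Finset.mul_sum,
        (sMap hn (pMap hn x)).2.2.1, x.2.2.1]
      ring
    · refine ⟨suppF x.val ∪ sigG x.val, U_face hn x, fun e he => ?_⟩
      by_cases hx : x.val e = 0
      · have hs : (sMap hn (pMap hn x)).val e ≠ 0 := by
          intro hs0
          apply he
          show (1-t) * (sMap hn (pMap hn x)).val e + t * x.val e = 0
          rw [hx, hs0, mul_zero, mul_zero, add_zero]
        have : e ∈ sigU (pv x) := by
          have := sF_supp hn (uf (pMap hn x)) e hs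
          rwa [uf_pMap hn x] at this
        exact Finset.mem_union_right _ (sigU_pv_subset hn x this)
      · exact Finset.mem_union_left _ (mem_suppF.mpr hx)⟩

def pCM (hn : 3 ≤ n) : C(Rl n, Sph n) := ⟨pMap hn, cont_pMap hn⟩
def sCM (hn : 3 ≤ n) : C(Sph n, Rl n) := ⟨sMap hn, cont_sMap hn⟩

def leftHomotopy (hn : 3 ≤ n) :
    ContinuousMap.Homotopy ((sCM hn).comp (pCM hn)) (ContinuousMap.id (Rl n)) where
  toContinuousMap := ⟨fun q => hPt hn q.1.val q.1.2.1 q.1.2.2 q.2, by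
    apply Continuous.subtype_mk
    apply continuous_pi
    intro e
    have tcont : Continuous fun q : unitInterval × Rl n => (q.1 : ℝ) :=
      continuous_subtype_val.comp continuous_fst
    have scont : Continuous fun q : unitInterval × Rl n =>
        (sMap hn (pMap hn q.2)).val e :=
      (cont_coord e).comp ((cont_sMap hn).comp ((cont_pMap hn).comp continuous_snd))
    have xcont : Continuous fun q : unitInterval × Rl n => q.2.val e :=
      (cont_coord e).comp continuous_snd
    exact ((continuous_const.sub tcont).mul scont).add (tcont.mul xcont)⟩
  map_zero_left x := by
    apply Subtype.ext
    funext e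
    show (1-(0:ℝ)) * _ + (0:ℝ) * _ = _
    rw [sub_zero, one_mul, zero_mul, add_zero]
    rfl
  map_one_left x := by
    apply Subtype.ext
    funext e
    show (1-(1:ℝ)) * _ + (1:ℝ) * _ = _
    rw [sub_self, zero_mul, one_mul, zero_add]
    rfl

def mainEquiv (hn : 3 ≤ n) : ContinuousMap.HomotopyEquiv (Rl n) (Sph n) where
  toFun := pCM hn
  invFun := sCM hn
  left_inv := ⟨leftHomotopy hn⟩
  right_inv := by
    have : (pCM hn).comp (sCM hn) = ContinuousMap.id (Sph n) :=
      ContinuousMap.ext (fun u => p_s_id hn u)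
    rw [this]

def sphereHomeoLIE {a b : ℕ}
    (e : EuclideanSpace ℝ (Fin a) ≃ₗᵢ[ℝ] EuclideanSpace ℝ (Fin b)) :
    (Metric.sphere (0 : EuclideanSpace ℝ (Fin a)) 1) ≃ₜ
      (Metric.sphere (0 : EuclideanSpace ℝ (Fin b)) 1) where
  toFun x := ⟨e x.val, by
    rw [mem_sphere_zero_iff_norm, e.norm_map]
    exact mem_sphere_zero_iff_norm.mp x.2⟩
  invFun y := ⟨e.symm y.val, by
    rw [mem_sphere_zero_iff_norm, e.symm.norm_map]
    exact mem_sphere_zero_iff_norm.mp y.2⟩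
  left_inv x := Subtype.ext (e.symm_apply_apply x.val)
  right_inv y := Subtype.ext (e.apply_symm_apply y.val)
  continuous_toFun := by
    apply Continuous.subtype_mk
    exact e.continuous.comp continuous_subtype_val
  continuous_invFun := by
    apply Continuous.subtype_mk
    exact e.symm.continuous.comp continuous_subtype_val

end WCdev

/-- for odd `n ≥ 3`, the 2-matching complex of the fully whiskered
`n`-cycle is homotopy equivalent to `S^{n-1}`. -/
theorem stmt_10 (n : ℕ) (hn : 3 ≤ n) (hodd : Odd n) :
    Nonempty (ContinuousMap.HomotopyEquiv (realization (M2 (whiskeredCycle n)))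
      (sphereSpace (n - 1))) := by
  haveI : NeZero n := ⟨by omega⟩
  have heq : n = (n - 1) + 1 := by omega
  exact ⟨(WCdev.mainEquiv hn).trans
    ((WCdev.sphereHomeoLIE
      (LinearIsometryEquiv.piLpCongrLeft 2 ℝ ℝ (finCongr heq))).toHomotopyEquiv)⟩

end
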